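/- The alternating group A₄ of degree 4 is not a Cayley integral group. -/

import Mathlib

open scoped Classical

/-- The adjacency matrix of the undirected Cayley graph `Cay(G,S)`:
the `(a,b)` entry is `1` if `a * b⁻¹ ∈ S` and `0` otherwise. -/
noncomputable def cayleyAdjMatrix {G : Type*} [Group G] [Fintype G] (S : Set G) :
    Matrix G G ℝ :=
  Matrix.of fun a b => if a * b⁻¹ ∈ S then (1 : ℝ) else 0

/-- A finite group `G` is *Cayley integral* if for every subset `S ⊆ G` with `1 ∉ S` and
`S = S⁻¹`, every eigenvalue of the adjacency matrix of the Cayley graph `Cay(G,S)`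
is an integer. -/
def IsCayleyIntegral (G : Type*) [Group G] [Fintype G] : Prop :=
  ∀ S : Set G, (1 : G) ∉ S → (∀ s ∈ S, s⁻¹ ∈ S) →
    ∀ μ ∈ spectrum ℝ (cayleyAdjMatrix S), ∃ k : ℤ, μ = (k : ℝ)

namespace A4NotCI

/-- If a real matrix has an eigenvector, the eigenvalue is in the spectrum. -/
lemma eigen_mem_spectrum {n : Type*} [Fintype n] (A : Matrix n n ℝ) (μ₀ : ℝ)
    (w : n → ℝ) (hw : w ≠ 0) (h : A.mulVec w = μ₀ • w) : μ₀ ∈ spectrum ℝ A := by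
  rw [spectrum.mem_iff]
  intro hu
  rw [Matrix.isUnit_iff_isUnit_det] at hu
  have hker : (algebraMap ℝ (Matrix n n ℝ) μ₀ - A).mulVec w = 0 := by
    rw [Matrix.sub_mulVec, h, Algebra.algebraMap_eq_smul_one, Matrix.smul_mulVec,
      Matrix.one_mulVec, sub_self]
  have hdet : (algebraMap ℝ (Matrix n n ℝ) μ₀ - A).det = 0 :=
    (Matrix.exists_mulVec_eq_zero_iff).mp ⟨w, hw, hker⟩
  rw [hdet] at hu
  simp at hu

abbrev G := alternatingGroup (Fin 4)

def c1 : Equiv.Perm (Fin 4) := Equiv.swap 1 2 * Equiv.swap 2 3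
def c2 : Equiv.Perm (Fin 4) := Equiv.swap 2 3 * Equiv.swap 1 2
def c3 : Equiv.Perm (Fin 4) := Equiv.swap 0 1 * Equiv.swap 2 3
def c4 : Equiv.Perm (Fin 4) := Equiv.swap 0 2 * Equiv.swap 1 3

def g1 : G := ⟨c1, Equiv.Perm.mem_alternatingGroup.mpr (by decide)⟩
def g2 : G := ⟨c2, Equiv.Perm.mem_alternatingGroup.mpr (by decide)⟩
def g3 : G := ⟨c3, Equiv.Perm.mem_alternatingGroup.mpr (by decide)⟩
def g4 : G := ⟨c4, Equiv.Perm.mem_alternatingGroup.mpr (by decide)⟩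

def S : Set G := {g1, g2, g3, g4}

lemma mem_S_iff (u : G) : u ∈ S ↔ u = g1 ∨ u = g2 ∨ u = g3 ∨ u = g4 := by
  simp [S, Set.mem_insert_iff, Set.mem_singleton_iff]

/- the inverses of c1,…,c4 as explicit functions -/
def e1 : Fin 4 → Fin 4 := ![0,3,1,2]
def e2 : Fin 4 → Fin 4 := ![0,2,3,1]
def e3 : Fin 4 → Fin 4 := ![1,0,3,2]
def e4 : Fin 4 → Fin 4 := ![2,3,0,1]

lemma hc1 : ∀ x, c1⁻¹ x = e1 x := by decide
lemma hc2 : ∀ x, c2⁻¹ x = e2 x := by decide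
lemma hc3 : ∀ x, c3⁻¹ x = e3 x := by decide
lemma hc4 : ∀ x, c4⁻¹ x = e4 x := by decide

/- integer tables describing the eigenvector: the eigenvector is
`a ↦ t1 (a 0) (a 1) + √17 * t2 (a 0) (a 1)` -/
def t1 : Matrix (Fin 4) (Fin 4) ℤ :=
  !![0,-4,-4,2; 3,0,-5,1; 3,-5,0,1; 8,0,0,0]
def t2 : Matrix (Fin 4) (Fin 4) ℤ :=
  !![0,0,0,-2; 1,0,1,-1; 1,1,0,-1; 0,0,0,0]

lemma key1 : ∀ i j : Fin 4,
    2 * (t1 (e1 i) (e1 j) + t1 (e2 i) (e2 j) + t1 (e3 i) (e3 j) + t1 (e4 i) (e4 j))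
    = 17 * t2 i j - t1 i j := by decide

lemma key2 : ∀ i j : Fin 4,
    2 * (t2 (e1 i) (e1 j) + t2 (e2 i) (e2 j) + t2 (e3 i) (e3 j) + t2 (e4 i) (e4 j))
    = t1 i j - t2 i j := by decide

noncomputable def s : ℝ := Real.sqrt 17
noncomputable def μ : ℝ := (-1 + s) / 2
noncomputable def v : G → ℝ := fun a =>
  ((t1 (a.1 0) (a.1 1) : ℤ) : ℝ) + s * ((t2 (a.1 0) (a.1 1) : ℤ) : ℝ)

lemma hs : s * s = 17 := Real.mul_self_sqrt (by norm_num)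

lemma val_inv_mul (g a : G) (k : Fin 4) : ((g⁻¹ * a : G) : Equiv.Perm (Fin 4)) k
    = ((g : Equiv.Perm (Fin 4))⁻¹) (((a : G) : Equiv.Perm (Fin 4)) k) := rfl

lemma eigen_eq (a : G) : v (g1⁻¹ * a) + v (g2⁻¹ * a) + v (g3⁻¹ * a) + v (g4⁻¹ * a)
    = μ * v a := by
  set i := ((a : G) : Equiv.Perm (Fin 4)) 0 with hi
  set j := ((a : G) : Equiv.Perm (Fin 4)) 1 with hj
  have hv1 : v (g1⁻¹ * a) = ((t1 (e1 i) (e1 j) : ℤ) : ℝ) + s * ((t2 (e1 i) (e1 j) : ℤ) : ℝ) := by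
    simp only [v, val_inv_mul, g1, hc1, hi, hj]
  have hv2 : v (g2⁻¹ * a) = ((t1 (e2 i) (e2 j) : ℤ) : ℝ) + s * ((t2 (e2 i) (e2 j) : ℤ) : ℝ) := by
    simp only [v, val_inv_mul, g2, hc2, hi, hj]
  have hv3 : v (g3⁻¹ * a) = ((t1 (e3 i) (e3 j) : ℤ) : ℝ) + s * ((t2 (e3 i) (e3 j) : ℤ) : ℝ) := by
    simp only [v, val_inv_mul, g3, hc3, hi, hj]
  have hv4 : v (g4⁻¹ * a) = ((t1 (e4 i) (e4 j) : ℤ) : ℝ) + s * ((t2 (e4 i) (e4 j) : ℤ) : ℝ) := by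
    simp only [v, val_inv_mul, g4, hc4, hi, hj]
  have h1 : (2 : ℝ) * ((t1 (e1 i) (e1 j) : ℝ) + (t1 (e2 i) (e2 j) : ℝ)
      + (t1 (e3 i) (e3 j) : ℝ) + (t1 (e4 i) (e4 j) : ℝ))
      = 17 * (t2 i j : ℝ) - (t1 i j : ℝ) := by
    exact_mod_cast congrArg (Int.cast : ℤ → ℝ) (key1 i j)
  have h2 : (2 : ℝ) * ((t2 (e1 i) (e1 j) : ℝ) + (t2 (e2 i) (e2 j) : ℝ)
      + (t2 (e3 i) (e3 j) : ℝ) + (t2 (e4 i) (e4 j) : ℝ))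
      = (t1 i j : ℝ) - (t2 i j : ℝ) := by
    exact_mod_cast congrArg (Int.cast : ℤ → ℝ) (key2 i j)
  rw [hv1, hv2, hv3, hv4]
  show _ = μ * (((t1 i j : ℤ) : ℝ) + s * ((t2 i j : ℤ) : ℝ))
  simp only [μ]
  linear_combination h1 / 2 + (s / 2) * h2 - ((t2 i j : ℝ) / 2) * hs

lemma hne12 : g1 ≠ g2 := fun h => absurd (congrArg Subtype.val h) (by decide)
lemma hne13 : g1 ≠ g3 := fun h => absurd (congrArg Subtype.val h) (by decide)
lemma hne14 : g1 ≠ g4 := fun h => absurd (congrArg Subtype.val h) (by decide)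
lemma hne23 : g2 ≠ g3 := fun h => absurd (congrArg Subtype.val h) (by decide)
lemma hne24 : g2 ≠ g4 := fun h => absurd (congrArg Subtype.val h) (by decide)
lemma hne34 : g3 ≠ g4 := fun h => absurd (congrArg Subtype.val h) (by decide)

lemma entry_decomp (u : G) :
    (if u ∈ S then (1 : ℝ) else 0) =
      (if u = g1 then (1:ℝ) else 0) + (if u = g2 then (1:ℝ) else 0)
      + (if u = g3 then (1:ℝ) else 0) + (if u = g4 then (1:ℝ) else 0) := by
  by_cases hu : u ∈ S
  · rw [if_pos hu]
    rcases (mem_S_iff u).mp hu with rfl | rfl | rfl | rfl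
    · rw [if_pos rfl, if_neg hne12, if_neg hne13, if_neg hne14]; ring
    · rw [if_neg (Ne.symm hne12), if_pos rfl, if_neg hne23, if_neg hne24]; ring
    · rw [if_neg (Ne.symm hne13), if_neg (Ne.symm hne23), if_pos rfl, if_neg hne34]; ring
    · rw [if_neg (Ne.symm hne14), if_neg (Ne.symm hne24), if_neg (Ne.symm hne34), if_pos rfl]
      ring
  · rw [if_neg hu]
    have n1 : u ≠ g1 := fun h => hu ((mem_S_iff u).mpr (Or.inl h))
    have n2 : u ≠ g2 := fun h => hu ((mem_S_iff u).mpr (Or.inr (Or.inl h)))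
    have n3 : u ≠ g3 := fun h => hu ((mem_S_iff u).mpr (Or.inr (Or.inr (Or.inl h))))
    have n4 : u ≠ g4 := fun h => hu ((mem_S_iff u).mpr (Or.inr (Or.inr (Or.inr h))))
    rw [if_neg n1, if_neg n2, if_neg n3, if_neg n4]; ring

lemma cond_iff (g a b : G) : (a * b⁻¹ = g) ↔ (g⁻¹ * a = b) := by
  constructor
  · intro h; rw [← h]; group
  · intro h; rw [← h]; group

lemma single_mulvec (g : G) (a : G) :
    (∑ b : G, (if a * b⁻¹ = g then (1:ℝ) else 0) * v b) = v (g⁻¹ * a) := by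
  have key : ∀ b : G, (if a * b⁻¹ = g then (1:ℝ) else 0) * v b
      = if g⁻¹ * a = b then v b else 0 := by
    intro b
    by_cases h : g⁻¹ * a = b
    · rw [if_pos h, if_pos ((cond_iff g a b).mpr h), one_mul]
    · rw [if_neg h, if_neg (fun hc => h ((cond_iff g a b).mp hc)), zero_mul]
  rw [Finset.sum_congr rfl (fun b _ => key b)]
  simp

lemma mulvec_eq : (cayleyAdjMatrix S).mulVec v = μ • v := by
  funext a
  have h : (cayleyAdjMatrix S).mulVec v a
      = v (g1⁻¹ * a) + v (g2⁻¹ * a) + v (g3⁻¹ * a) + v (g4⁻¹ * a) := by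
    simp only [Matrix.mulVec, dotProduct, cayleyAdjMatrix, Matrix.of_apply]
    calc (∑ b : G, (if a * b⁻¹ ∈ S then (1:ℝ) else 0) * v b)
        = ∑ b : G, ((if a * b⁻¹ = g1 then (1:ℝ) else 0) * v b
          + (if a * b⁻¹ = g2 then (1:ℝ) else 0) * v b
          + (if a * b⁻¹ = g3 then (1:ℝ) else 0) * v b
          + (if a * b⁻¹ = g4 then (1:ℝ) else 0) * v b) := by
          refine Finset.sum_congr rfl (fun b _ => ?_)
          rw [entry_decomp (a * b⁻¹)]; ring
      _ = v (g1⁻¹ * a) + v (g2⁻¹ * a) + v (g3⁻¹ * a) + v (g4⁻¹ * a) := by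
          simp only [Finset.sum_add_distrib, single_mulvec]
  rw [h, eigen_eq]
  rfl

lemma v_ne_zero : v ≠ 0 := by
  intro h
  have h1 : v 1 = 0 := by rw [h]; rfl
  have e0 : (((1 : G) : Equiv.Perm (Fin 4))) 0 = 0 := rfl
  have e1' : (((1 : G) : Equiv.Perm (Fin 4))) 1 = 1 := rfl
  have ht1 : t1 0 1 = -4 := by decide
  have ht2 : t2 0 1 = 0 := by decide
  rw [v] at h1
  simp only [e0, e1', ht1, ht2] at h1
  norm_num at h1

lemma hS1 : (1 : G) ∉ S := by
  intro h
  rcases (mem_S_iff 1).mp h with h' | h' | h' | h' <;>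
    exact absurd (congrArg Subtype.val h') (by decide)

lemma hSinv : ∀ t ∈ S, t⁻¹ ∈ S := by
  intro t ht
  rcases (mem_S_iff t).mp ht with rfl | rfl | rfl | rfl
  · exact (mem_S_iff _).mpr (Or.inr (Or.inl (Subtype.ext (by decide))))
  · exact (mem_S_iff _).mpr (Or.inl (Subtype.ext (by decide)))
  · exact (mem_S_iff _).mpr (Or.inr (Or.inr (Or.inl (Subtype.ext (by decide)))))
  · exact (mem_S_iff _).mpr (Or.inr (Or.inr (Or.inr (Subtype.ext (by decide)))))

end A4NotCI

/-- The alternating group `A₄` of degree 4 is not Cayley integral. -/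
theorem a4_not_cayley_integral : ¬ IsCayleyIntegral (alternatingGroup (Fin 4)) := by
  intro h
  obtain ⟨k, hk⟩ := h A4NotCI.S A4NotCI.hS1 A4NotCI.hSinv A4NotCI.μ
    (A4NotCI.eigen_mem_spectrum _ _ _ A4NotCI.v_ne_zero A4NotCI.mulvec_eq)
  have hμ : A4NotCI.μ = (-1 + Real.sqrt 17) / 2 := rfl
  rw [hμ] at hk
  have hirr : Irrational (Real.sqrt 17) := by
    have := (by norm_num : Nat.Prime 17).irrational_sqrt
    norm_num at this
    exact_mod_cast (by norm_num : Nat.Prime 17).irrational_sqrt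
  exact hirr.ne_int (2 * k + 1) (by push_cast; linarith)
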